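/- Let H ∈ (0,1/2] and C^H(s,t) := (1/2)(t^{2H} + s^{2H} − |t−s|^{2H}) on [0,T]^2 (the covariance of fractional Brownian motion). Then C^H has finite (1/(2H))-variation in the 2D grid sense and moreover V_{1/(2H)}(C^H; [s,t]^2) ≤ c_H |t−s|^{2H} for a constant c_H depending only on H. -/

import Mathlib

open Set
open scoped ENNReal NNReal

/-- A closed rectangle `[a,b] × [c,d] ⊆ ℝ²`, encoded by its four corner coordinates. -/
structure Rect where
  a : ℝ
  b : ℝ
  c : ℝ
  d : ℝ

noncomputable instance : DecidableEq Rect := fun _ _ => Classical.dec _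

/-- The closed rectangle as a subset of the plane. -/
def Rect.toSet (R : Rect) : Set (ℝ × ℝ) := Set.Icc R.a R.b ×ˢ Set.Icc R.c R.d

/-- The open interior of the rectangle. -/
def Rect.openSet (R : Rect) : Set (ℝ × ℝ) := Set.Ioo R.a R.b ×ˢ Set.Ioo R.c R.d

/-- The rectangle is well formed: `a ≤ b`, `c ≤ d`. -/
def Rect.Valid (R : Rect) : Prop := R.a ≤ R.b ∧ R.c ≤ R.d

/-- Rectangular increment of `f` over `[a,b] × [c,d]`. -/
def Rect.inc (f : ℝ × ℝ → ℝ) (R : Rect) : ℝ :=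
  f (R.b, R.d) - f (R.a, R.d) - f (R.b, R.c) + f (R.a, R.c)

/-- `P` is a partition of `R` into essentially disjoint rectangles. -/
def IsPartition (R : Rect) (P : Finset Rect) : Prop :=
  (∀ Q ∈ P, Q.Valid) ∧
  ((P : Set Rect).Pairwise fun Q Q' => Disjoint Q.openSet Q'.openSet) ∧
  (⋃ Q ∈ P, Q.toSet) = R.toSet

/-- The controlled `p`-variation of `f` over `R`, raised to the power `p`:
`sup` over all partitions of `R` into essentially disjoint rectangles of
`Σ |f(A)|^p`.  So `|f|_{p-var;R} = (cVarSum p f R) ^ (1/p)`. -/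
noncomputable def cVarSum (p : ℝ) (f : ℝ × ℝ → ℝ) (R : Rect) : ℝ≥0∞ :=
  ⨆ (P : Finset Rect) (_ : IsPartition R P),
    ∑ Q ∈ P, ENNReal.ofReal |Rect.inc f Q| ^ p

/-- The grid `p`-variation of `f` over `R`, raised to the power `p`:
`sup` over grid-like partitions (products of dissections of the two sides)
of `Σ_{i,j} |f([t_i,t_{i+1}] × [s_j,s_{j+1}])|^p`.
So `V_p(f;R) = (gridVarSum p f R) ^ (1/p)`. -/
noncomputable def gridVarSum (p : ℝ) (f : ℝ × ℝ → ℝ) (R : Rect) : ℝ≥0∞ :=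
  ⨆ (n : ℕ) (m : ℕ) (t : Fin (n+1) → ℝ) (s : Fin (m+1) → ℝ)
    (_ : Monotone t) (_ : Monotone s)
    (_ : t 0 = R.a) (_ : t (Fin.last n) = R.b)
    (_ : s 0 = R.c) (_ : s (Fin.last m) = R.d),
    ∑ i : Fin n, ∑ j : Fin m,
      ENNReal.ofReal |Rect.inc f ⟨t i.castSucc, t i.succ, s j.castSucc, s j.succ⟩| ^ p

/-- The covariance of fractional Brownian motion with Hurst parameter `H`:
`C^H(s,t) = (1/2)(t^{2H} + s^{2H} - |t-s|^{2H})`. -/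
noncomputable def fbmCov (H : ℝ) : ℝ × ℝ → ℝ :=
  fun x => (x.2 ^ (2 * H) + x.1 ^ (2 * H) - |x.2 - x.1| ^ (2 * H)) / 2

namespace FbmAux
variable {α : ℝ}

/-- Concavity 4-point inequality. -/
lemma four (hα0 : 0 < α) (hα1 : α ≤ 1) {a b c d : ℝ} (ha : 0 ≤ a) (hac : a ≤ c)
    (had : a ≤ d) (habcd : a + b = c + d) :
    a ^ α + b ^ α ≤ c ^ α + d ^ α := by
  have hcb : c ≤ b := by linarith
  have hdb : d ≤ b := by linarith
  have hab : a ≤ b := hac.trans hcb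
  rcases eq_or_lt_of_le hab with h | h
  · have hc : c = a := le_antisymm (h ▸ hcb) hac
    have hd : d = a := le_antisymm (h ▸ hdb) had
    rw [hc, hd, ← h]
  · have hba : 0 < b - a := sub_pos.2 h
    have hl0 : 0 ≤ (b - c) / (b - a) := div_nonneg (by linarith) hba.le
    have hm0 : 0 ≤ (c - a) / (b - a) := div_nonneg (by linarith) hba.le
    have hlm : (b - c) / (b - a) + (c - a) / (b - a) = 1 := by field_simp; ring
    have hml : (c - a) / (b - a) + (b - c) / (b - a) = 1 := by linarith
    have hb0 : (0:ℝ) ≤ b := ha.trans hab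
    have hcf : ((b - c) / (b - a)) * a + ((c - a) / (b - a)) * b = c := by
      field_simp; ring
    have hdf : ((c - a) / (b - a)) * a + ((b - c) / (b - a)) * b = d := by
      have hcd : c - a = b - d := by linarith
      rw [hcd]; field_simp; linear_combination b * habcd
    have hcon := Real.concaveOn_rpow hα0.le hα1
    have h1 := hcon.2 (mem_Ici.2 ha) (mem_Ici.2 hb0) hl0 hm0 hlm
    have h2 := hcon.2 (mem_Ici.2 ha) (mem_Ici.2 hb0) hm0 hl0 hml
    simp only [smul_eq_mul] at h1 h2
    rw [hcf] at h1
    rw [hdf] at h2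
    calc a ^ α + b ^ α
        = ((b - c) / (b - a) + (c - a) / (b - a)) * (a ^ α + b ^ α) := by rw [hlm]; ring
      _ = (((b - c) / (b - a)) * a ^ α + ((c - a) / (b - a)) * b ^ α)
          + (((c - a) / (b - a)) * a ^ α + ((b - c) / (b - a)) * b ^ α) := by ring
      _ ≤ c ^ α + d ^ α := add_le_add h1 h2

lemma sub_rpow_le (hα0 : 0 < α) (hα1 : α ≤ 1) {x y : ℝ} (hx : 0 ≤ x) (hxy : x ≤ y) :
    y ^ α - x ^ α ≤ (y - x) ^ α := by
  have h := four hα0 hα1 (a := 0) (b := y) (c := y - x) (d := x) le_rfl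
    (by linarith) hx (by ring)
  rw [Real.zero_rpow hα0.ne'] at h
  linarith

lemma abs_rpow_sub_le (hα0 : 0 < α) (hα1 : α ≤ 1) {x y : ℝ} (hx : 0 ≤ x) (hy : 0 ≤ y) :
    |x ^ α - y ^ α| ≤ |x - y| ^ α := by
  rcases le_total x y with h | h
  · rw [abs_of_nonpos (by simp [Real.rpow_le_rpow hx h hα0.le]), abs_of_nonpos (by linarith)]
    have := sub_rpow_le hα0 hα1 hx h
    rw [neg_sub, neg_sub]
    linarith
  · rw [abs_of_nonneg (by simp [Real.rpow_le_rpow hy h hα0.le]), abs_of_nonneg (by linarith)]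
    exact sub_rpow_le hα0 hα1 hy h

/-- The rectangular increment of the fBM covariance, explicitly. -/
noncomputable def F (α a b c d : ℝ) : ℝ :=
  (|d - a| ^ α + |b - c| ^ α - |d - b| ^ α - |c - a| ^ α) / 2

lemma F_symm (α a b c d : ℝ) : F α a b c d = F α c d a b := by
  unfold F
  rw [abs_sub_comm d b, abs_sub_comm c a]
  ring

lemma abs_F_le (hα0 : 0 < α) (hα1 : α ≤ 1) {a b : ℝ} (hab : a ≤ b) (c d : ℝ) :
    |F α a b c d| ≤ (b - a) ^ α := by
  have h1 : abs (|d - a| ^ α - |d - b| ^ α) ≤ (b - a) ^ α := by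
    refine le_trans (abs_rpow_sub_le hα0 hα1 (abs_nonneg _) (abs_nonneg _)) ?_
    refine Real.rpow_le_rpow (abs_nonneg _) ?_ hα0.le
    calc abs (|d - a| - |d - b|) ≤ |(d - a) - (d - b)| := abs_abs_sub_abs_le_abs_sub _ _
      _ = b - a := by rw [show (d - a) - (d - b) = -(a - b) by ring, abs_neg,
            abs_of_nonpos (by linarith)]; ring
  have h2 : abs (|b - c| ^ α - |c - a| ^ α) ≤ (b - a) ^ α := by
    refine le_trans (abs_rpow_sub_le hα0 hα1 (abs_nonneg _) (abs_nonneg _)) ?_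
    refine Real.rpow_le_rpow (abs_nonneg _) ?_ hα0.le
    calc abs (|b - c| - |c - a|) = abs (|b - c| - |a - c|) := by rw [abs_sub_comm c a]
      _ ≤ |(b - c) - (a - c)| := abs_abs_sub_abs_le_abs_sub _ _
      _ = b - a := by rw [show (b - c) - (a - c) = b - a by ring,
            abs_of_nonneg (by linarith)]
  rw [abs_le] at h1 h2 ⊢
  unfold F
  constructor <;> [skip; skip] <;> · obtain ⟨h1a, h1b⟩ := h1; obtain ⟨h2a, h2b⟩ := h2; linarith

lemma F_nonpos (hα0 : 0 < α) (hα1 : α ≤ 1) {a b c d : ℝ} (ha : 0 ≤ a) (hab : a ≤ b)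
    (hbc : b ≤ c) (hcd : c ≤ d) : F α a b c d ≤ 0 := by
  have h := four hα0 hα1 (a := c - b) (b := d - a) (c := c - a) (d := d - b)
    (by linarith) (by linarith) (by linarith) (by ring)
  unfold F
  rw [abs_of_nonneg (by linarith : (0:ℝ) ≤ d - a), abs_of_nonpos (by linarith : b - c ≤ 0),
    abs_of_nonneg (by linarith : (0:ℝ) ≤ d - b), abs_of_nonneg (by linarith : (0:ℝ) ≤ c - a)]
  rw [neg_sub]
  linarith

/-- The monotone "potential" used for telescoping within a row. -/
noncomputable def G (α a b y : ℝ) : ℝ :=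
  ((min b (max a y) - a) ^ α - (b - min b (max a y)) ^ α) / 2

lemma clamp_mem {a b y : ℝ} (hab : a ≤ b) : a ≤ min b (max a y) ∧ min b (max a y) ≤ b :=
  ⟨le_min hab (le_max_left _ _), min_le_left _ _⟩

lemma G_diff_nonneg (hα0 : 0 < α) {a b : ℝ} (hab : a ≤ b) {y₁ y₂ : ℝ} (h : y₁ ≤ y₂) :
    0 ≤ G α a b y₂ - G α a b y₁ := by
  have h₁ := clamp_mem (a := a) (b := b) (y := y₁) hab
  have h₂ := clamp_mem (a := a) (b := b) (y := y₂) hab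
  have hc : min b (max a y₁) ≤ min b (max a y₂) :=
    min_le_min le_rfl (max_le_max le_rfl h)
  have e1 : (min b (max a y₁) - a) ^ α ≤ (min b (max a y₂) - a) ^ α :=
    Real.rpow_le_rpow (by linarith [h₁.1]) (by linarith) hα0.le
  have e2 : (b - min b (max a y₂)) ^ α ≤ (b - min b (max a y₁)) ^ α :=
    Real.rpow_le_rpow (by linarith [h₂.2]) (by linarith) hα0.le
  unfold G
  linarith

lemma G_diff_le (hα0 : 0 < α) {a b : ℝ} (hab : a ≤ b) (y₁ y₂ : ℝ) :
    G α a b y₂ - G α a b y₁ ≤ (b - a) ^ α := by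
  have key : ∀ y : ℝ, |G α a b y| ≤ (b - a) ^ α / 2 := by
    intro y
    have h₁ := clamp_mem (a := a) (b := b) (y := y) hab
    have e1 : (min b (max a y) - a) ^ α ≤ (b - a) ^ α :=
      Real.rpow_le_rpow (by linarith [h₁.1]) (by linarith [h₁.2]) hα0.le
    have e2 : (b - min b (max a y)) ^ α ≤ (b - a) ^ α :=
      Real.rpow_le_rpow (by linarith [h₁.2]) (by linarith [h₁.1]) hα0.le
    have p1 : 0 ≤ (min b (max a y) - a) ^ α := Real.rpow_nonneg (by linarith [h₁.1]) _
    have p2 : 0 ≤ (b - min b (max a y)) ^ α := Real.rpow_nonneg (by linarith [h₁.2]) _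
    rw [abs_le]
    unfold G
    constructor <;> linarith
  have k1 := (abs_le.1 (key y₁)).1
  have k2 := (abs_le.1 (key y₂)).2
  linarith

lemma F_eq_G_diff (hα0 : 0 < α) {a b c d : ℝ} (hac : a ≤ c) (hcd : c ≤ d) (hdb : d ≤ b) :
    F α a b c d = G α a b d - G α a b c := by
  have hc : min b (max a c) = c := by
    rw [max_eq_right hac, min_eq_right (hcd.trans hdb)]
  have hd : min b (max a d) = d := by
    rw [max_eq_right (hac.trans hcd), min_eq_right hdb]
  unfold F G
  rw [hc, hd, abs_of_nonneg (by linarith : (0:ℝ) ≤ d - a),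
    abs_of_nonneg (by linarith : (0:ℝ) ≤ b - c), abs_of_nonpos (by linarith : d - b ≤ 0),
    abs_of_nonneg (by linarith : (0:ℝ) ≤ c - a)]
  ring

/-- Telescoping potential for the full-row sum. -/
noncomputable def phi (α a b y : ℝ) : ℝ := (|y - a| ^ α - |y - b| ^ α) / 2

lemma F_eq_phi_diff (α a b c d : ℝ) : F α a b c d = phi α a b d - phi α a b c := by
  unfold F phi
  rw [abs_sub_comm c b]
  ring

lemma card_straddle_le_one {m : ℕ} {v : ℕ → ℝ} (hv : Monotone v) (x : ℝ) :
    ((Finset.range m).filter (fun j => v j < x ∧ x < v (j+1))).card ≤ 1 := by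
  classical
  rw [Finset.card_le_one]
  intro j hj j' hj'
  simp only [Finset.mem_filter] at hj hj'
  have key : ∀ p q : ℕ, p < q → v p < x ∧ x < v (p+1) → v q < x ∧ x < v (q+1) → False := by
    intro p q hpq hp hq
    have := hv (Nat.succ_le_of_lt hpq)
    linarith [hp.2, hq.1]
  rcases lt_trichotomy j j' with h | h | h
  · exact absurd (key j j' h hj.2 hj'.2) (not_false)
  · exact h
  · exact absurd (key j' j h hj'.2 hj.2) (not_false)

lemma row (hα0 : 0 < α) (hα1 : α ≤ 1) {a b : ℝ} (ha : 0 ≤ a) (hab : a ≤ b)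
    (m : ℕ) (v : ℕ → ℝ) (hv : Monotone v) (hv0 : 0 ≤ v 0) :
    ∑ j ∈ Finset.range m, |F α a b (v j) (v (j+1))| ≤ 7 * (b - a) ^ α := by
  classical
  set B := (b - a) ^ α with hB
  have hB0 : 0 ≤ B := Real.rpow_nonneg (by linarith) _
  have point : ∀ j ∈ Finset.range m,
      |F α a b (v j) (v (j+1))| ≤
        (-F α a b (v j) (v (j+1)) + 2 * (G α a b (v (j+1)) - G α a b (v j))
        + (if v j < a ∧ a < v (j+1) then 2 * B else 0))
        + (if v j < b ∧ b < v (j+1) then 2 * B else 0) := by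
    intro j _
    have hcd : v j ≤ v (j+1) := hv (Nat.le_succ j)
    have hc0 : 0 ≤ v j := hv0.trans (hv (Nat.zero_le j))
    have hG : 0 ≤ G α a b (v (j+1)) - G α a b (v j) := G_diff_nonneg hα0 hab hcd
    have habs : |F α a b (v j) (v (j+1))| ≤ B := abs_F_le hα0 hα1 hab _ _
    have hi1 : (0:ℝ) ≤ (if v j < a ∧ a < v (j+1) then 2 * B else 0) := by
      split_ifs <;> linarith
    have hi2 : (0:ℝ) ≤ (if v j < b ∧ b < v (j+1) then 2 * B else 0) := by
      split_ifs <;> linarith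
    by_cases h1 : v (j+1) ≤ a
    · have hF : F α a b (v j) (v (j+1)) ≤ 0 := by
        rw [F_symm]; exact F_nonpos hα0 hα1 hc0 hcd h1 hab
      rw [abs_of_nonpos hF]; linarith
    by_cases h2 : b ≤ v j
    · have hF : F α a b (v j) (v (j+1)) ≤ 0 := F_nonpos hα0 hα1 ha hab h2 hcd
      rw [abs_of_nonpos hF]; linarith
    by_cases h3 : a ≤ v j ∧ v (j+1) ≤ b
    · have hX : F α a b (v j) (v (j+1)) = G α a b (v (j+1)) - G α a b (v j) :=
        F_eq_G_diff hα0 h3.1 hcd h3.2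
      have hX0 : 0 ≤ F α a b (v j) (v (j+1)) := hX ▸ hG
      rw [abs_of_nonneg hX0, hX]
      linarith
    · have hFF := le_abs_self (F α a b (v j) (v (j+1)))
      push_neg at h3
      rcases lt_or_ge (v j) a with hca | hca
      · rw [if_pos ⟨hca, lt_of_not_ge h1⟩]
        linarith
      · have hcond : v j < b ∧ b < v (j+1) := ⟨lt_of_not_ge h2, h3 hca⟩
        rw [if_pos hcond]
        linarith
  refine le_trans (Finset.sum_le_sum point) ?_
  rw [Finset.sum_add_distrib, Finset.sum_add_distrib, Finset.sum_add_distrib]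
  have t1 : ∑ j ∈ Finset.range m, -F α a b (v j) (v (j+1)) ≤ B := by
    have tele : ∑ j ∈ Finset.range m, F α a b (v j) (v (j+1))
        = phi α a b (v m) - phi α a b (v 0) := by
      rw [← Finset.sum_range_sub (fun k => phi α a b (v k)) m]
      exact Finset.sum_congr rfl fun j _ => F_eq_phi_diff α a b (v j) (v (j+1))
    rw [Finset.sum_neg_distrib, tele, ← F_eq_phi_diff]
    calc -F α a b (v 0) (v m) ≤ |F α a b (v 0) (v m)| := neg_le_abs _
      _ ≤ B := abs_F_le hα0 hα1 hab _ _
  have t2 : ∑ j ∈ Finset.range m, 2 * (G α a b (v (j+1)) - G α a b (v j)) ≤ 2 * B := by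
    rw [← Finset.mul_sum, Finset.sum_range_sub (fun k => G α a b (v k)) m]
    have := G_diff_le hα0 hab (v 0) (v m)
    linarith
  have t3 : ∀ x : ℝ, ∑ j ∈ Finset.range m, (if v j < x ∧ x < v (j+1) then 2 * B else 0) ≤ 2 * B := by
    intro x
    rw [Finset.sum_ite, Finset.sum_const_zero, add_zero, Finset.sum_const, nsmul_eq_mul]
    have hc := card_straddle_le_one (m := m) hv x
    have : (((Finset.range m).filter (fun j => v j < x ∧ x < v (j+1))).card : ℝ) ≤ 1 := by
      exact_mod_cast hc
    nlinarith
  linarith [t3 a, t3 b]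

lemma row_pow (hα0 : 0 < α) (hα1 : α ≤ 1) {a b : ℝ} (ha : 0 ≤ a) (hab : a ≤ b)
    (m : ℕ) (v : ℕ → ℝ) (hv : Monotone v) (hv0 : 0 ≤ v 0) :
    ∑ j ∈ Finset.range m, |F α a b (v j) (v (j+1))| ^ (1/α) ≤ 7 * (b - a) := by
  rcases eq_or_lt_of_le hab with rfl | hlt
  · have hz : ∀ j ∈ Finset.range m, |F α a a (v j) (v (j+1))| ^ (1/α) = 0 := by
      intro j _
      have habs : |F α a a (v j) (v (j+1))| ≤ (a - a) ^ α := abs_F_le hα0 hα1 le_rfl _ _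
      rw [sub_self, Real.zero_rpow hα0.ne'] at habs
      have h0 : |F α a a (v j) (v (j+1))| = 0 := le_antisymm habs (abs_nonneg _)
      rw [h0, Real.zero_rpow (by positivity)]
    rw [Finset.sum_congr rfl hz, Finset.sum_const_zero]
    simp
  · set B := (b - a) ^ α with hB
    have hBpos : 0 < B := Real.rpow_pos_of_pos (by linarith) _
    have hexp : (0:ℝ) ≤ 1/α - 1 := by
      rw [sub_nonneg, le_div_iff₀ hα0, one_mul]
      exact hα1
    have point : ∀ j ∈ Finset.range m,
        |F α a b (v j) (v (j+1))| ^ (1/α) ≤ B ^ (1/α - 1) * |F α a b (v j) (v (j+1))| := by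
      intro j _
      have habs : |F α a b (v j) (v (j+1))| ≤ B := abs_F_le hα0 hα1 hab _ _
      rcases eq_or_lt_of_le (abs_nonneg (F α a b (v j) (v (j+1)))) with h0 | h0
      · rw [← h0, Real.zero_rpow (by positivity), mul_zero]
      · have e1 : |F α a b (v j) (v (j+1))| ^ (1/α)
            = |F α a b (v j) (v (j+1))| ^ (1/α - 1) * |F α a b (v j) (v (j+1))| := by
          have h := Real.rpow_add h0 (1/α - 1) 1
          rw [Real.rpow_one] at h
          conv_lhs => rw [show (1:ℝ)/α = 1/α - 1 + 1 by ring]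
          exact h
        rw [e1]
        exact mul_le_mul_of_nonneg_right
          (Real.rpow_le_rpow (abs_nonneg _) habs hexp) (abs_nonneg _)
    refine le_trans (Finset.sum_le_sum point) ?_
    rw [← Finset.mul_sum]
    have hrow := row hα0 hα1 ha hab m v hv hv0
    refine le_trans (mul_le_mul_of_nonneg_left hrow (Real.rpow_nonneg hBpos.le _)) ?_
    have hend : B ^ (1/α - 1) * (7 * B) = 7 * (b - a) := by
      have h2 : B ^ ((1:ℝ)/α) = b - a := by
        rw [hB, ← Real.rpow_mul (by linarith : (0:ℝ) ≤ b - a)]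
        rw [mul_one_div_cancel hα0.ne', Real.rpow_one]
      calc B ^ (1/α - 1) * (7 * B) = 7 * (B ^ (1/α - 1) * B ^ (1:ℝ)) := by
            rw [Real.rpow_one]; ring
        _ = 7 * B ^ (1/α - 1 + 1) := by rw [← Real.rpow_add hBpos]
        _ = 7 * B ^ ((1:ℝ)/α) := by norm_num
        _ = 7 * (b - a) := by rw [h2]
    rw [hend]

lemma grid (hα0 : 0 < α) (hα1 : α ≤ 1) (n m : ℕ) (u v : ℕ → ℝ)
    (hu : Monotone u) (hv : Monotone v) (hu0 : 0 ≤ u 0) (hv0 : 0 ≤ v 0) :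
    ∑ i ∈ Finset.range n, ∑ j ∈ Finset.range m,
      |F α (u i) (u (i+1)) (v j) (v (j+1))| ^ (1/α) ≤ 7 * (u n - u 0) := by
  have step : ∀ i ∈ Finset.range n,
      ∑ j ∈ Finset.range m, |F α (u i) (u (i+1)) (v j) (v (j+1))| ^ (1/α)
        ≤ 7 * (u (i+1) - u i) :=
    fun i _ => row_pow hα0 hα1 (hu0.trans (hu (Nat.zero_le i))) (hu (Nat.le_succ i)) m v hv hv0
  refine le_trans (Finset.sum_le_sum step) ?_
  rw [← Finset.mul_sum, Finset.sum_range_sub (fun k => u k) n]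

end FbmAux

lemma inc_eq (H : ℝ) (a b c d : ℝ) :
    Rect.inc (fbmCov H) ⟨a, b, c, d⟩ = FbmAux.F (2*H) a b c d := by
  simp only [Rect.inc, fbmCov, FbmAux.F]
  rw [abs_sub_comm c b]
  ring

theorem fbmCov_grid_var_bound (H : ℝ) (hH0 : 0 < H) (hH : H ≤ 1 / 2) :
    ∃ cH : ℝ, 0 < cH ∧
      ∀ (T s t : ℝ), 0 ≤ s → s ≤ t → t ≤ T →
        gridVarSum (1 / (2 * H)) (fbmCov H) (Rect.mk s t s t) ^ (2 * H) ≤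
          ENNReal.ofReal (cH * (t - s) ^ (2 * H)) := by
  refine ⟨7, by norm_num, ?_⟩
  intro T s t hs hst _
  set α := 2 * H with hαdef
  have hα0 : 0 < α := by positivity
  have hα1 : α ≤ 1 := by rw [hαdef]; linarith
  have hts : (0:ℝ) ≤ t - s := by linarith
  have key : gridVarSum (1/α) (fbmCov H) (Rect.mk s t s t) ≤ ENNReal.ofReal (7 * (t - s)) := by
    rw [gridVarSum]
    refine iSup_le fun n => iSup_le fun m => iSup_le fun u => iSup_le fun v =>
      iSup_le fun hu => iSup_le fun hv => iSup_le fun hu0 => iSup_le fun hun =>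
      iSup_le fun hv0 => iSup_le fun hvm => ?_
    set U : ℕ → ℝ := fun k => u ⟨min k n, Nat.lt_succ_of_le (min_le_right _ _)⟩ with hU
    set V : ℕ → ℝ := fun k => v ⟨min k m, Nat.lt_succ_of_le (min_le_right _ _)⟩ with hV
    have hUmono : Monotone U := fun k k' hk => hu (by simp [Fin.le_def]; omega)
    have hVmono : Monotone V := fun k k' hk => hv (by simp [Fin.le_def]; omega)
    have hU0 : U 0 = s := by
      show u ⟨min 0 n, Nat.lt_succ_of_le (min_le_right _ _)⟩ = s
      rw [show (⟨min 0 n, Nat.lt_succ_of_le (min_le_right _ _)⟩ : Fin (n+1)) = 0 from by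
        ext; simp, hu0]
    have hUn : U n = t := by
      show u ⟨min n n, Nat.lt_succ_of_le (min_le_right _ _)⟩ = t
      rw [show (⟨min n n, Nat.lt_succ_of_le (min_le_right _ _)⟩ : Fin (n+1)) = Fin.last n from by
        ext; simp [Fin.last], hun]
    have hV0 : V 0 = s := by
      show v ⟨min 0 m, Nat.lt_succ_of_le (min_le_right _ _)⟩ = s
      rw [show (⟨min 0 m, Nat.lt_succ_of_le (min_le_right _ _)⟩ : Fin (m+1)) = 0 from by
        ext; simp, hv0]
    have hU0' : 0 ≤ U 0 := by rw [hU0]; exact hs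
    have hV0' : 0 ≤ V 0 := by rw [hV0]; exact hs
    have hsummand : ∀ (i : Fin n) (j : Fin m),
        ENNReal.ofReal
            |Rect.inc (fbmCov H) ⟨u i.castSucc, u i.succ, v j.castSucc, v j.succ⟩| ^ (1/α)
          = ENNReal.ofReal
            (|FbmAux.F α (U i) (U (i+1)) (V j) (V (j+1))| ^ (1/α)) := by
      intro i j
      have h1 : u i.castSucc = U i.val := by
        show _ = u ⟨min i.val n, Nat.lt_succ_of_le (min_le_right _ _)⟩
        congr 1
        ext
        simp [Nat.min_eq_left (le_of_lt i.isLt)]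
      have h2 : u i.succ = U (i.val + 1) := by
        show _ = u ⟨min (i.val + 1) n, Nat.lt_succ_of_le (min_le_right _ _)⟩
        congr 1
        ext
        simp [Nat.min_eq_left (Nat.succ_le_of_lt i.isLt)]
      have h3 : v j.castSucc = V j.val := by
        show _ = v ⟨min j.val m, Nat.lt_succ_of_le (min_le_right _ _)⟩
        congr 1
        ext
        simp [Nat.min_eq_left (le_of_lt j.isLt)]
      have h4 : v j.succ = V (j.val + 1) := by
        show _ = v ⟨min (j.val + 1) m, Nat.lt_succ_of_le (min_le_right _ _)⟩
        congr 1
        ext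
        simp [Nat.min_eq_left (Nat.succ_le_of_lt j.isLt)]
      rw [h1, h2, h3, h4, inc_eq, ← hαdef,
        ENNReal.ofReal_rpow_of_nonneg (abs_nonneg _) (by positivity)]
    calc (∑ i : Fin n, ∑ j : Fin m,
            ENNReal.ofReal
              |Rect.inc (fbmCov H) ⟨u i.castSucc, u i.succ, v j.castSucc, v j.succ⟩| ^ (1/α))
        = ∑ i : Fin n, ∑ j : Fin m,
            ENNReal.ofReal (|FbmAux.F α (U i) (U (i+1)) (V j) (V (j+1))| ^ (1/α)) :=
          Finset.sum_congr rfl fun i _ => Finset.sum_congr rfl fun j _ => hsummand i j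
      _ = ∑ i ∈ Finset.range n, ∑ j ∈ Finset.range m,
            ENNReal.ofReal (|FbmAux.F α (U i) (U (i+1)) (V j) (V (j+1))| ^ (1/α)) := by
          rw [← Fin.sum_univ_eq_sum_range (fun i => ∑ j ∈ Finset.range m,
            ENNReal.ofReal (|FbmAux.F α (U i) (U (i+1)) (V j) (V (j+1))| ^ (1/α))) n]
          exact Finset.sum_congr rfl fun i _ =>
            Fin.sum_univ_eq_sum_range
              (fun j => ENNReal.ofReal (|FbmAux.F α (U i) (U (i+1)) (V j) (V (j+1))| ^ (1/α))) m
      _ = ENNReal.ofReal (∑ i ∈ Finset.range n, ∑ j ∈ Finset.range m,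
            |FbmAux.F α (U i) (U (i+1)) (V j) (V (j+1))| ^ (1/α)) := by
          rw [ENNReal.ofReal_sum_of_nonneg (fun i _ => Finset.sum_nonneg
            (fun j _ => Real.rpow_nonneg (abs_nonneg _) _))]
          exact Finset.sum_congr rfl fun i _ =>
            (ENNReal.ofReal_sum_of_nonneg fun j _ => Real.rpow_nonneg (abs_nonneg _) _).symm
      _ ≤ ENNReal.ofReal (7 * (t - s)) := by
          refine ENNReal.ofReal_le_ofReal ?_
          have := FbmAux.grid hα0 hα1 n m U V hUmono hVmono hU0' hV0'
          rw [hU0, hUn] at this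
          exact this
  calc gridVarSum (1 / (2*H)) (fbmCov H) (Rect.mk s t s t) ^ (2*H)
      ≤ ENNReal.ofReal (7 * (t - s)) ^ α := by
        rw [show (1:ℝ) / (2*H) = 1/α by rw [hαdef]]
        exact ENNReal.rpow_le_rpow key hα0.le
    _ = ENNReal.ofReal ((7 * (t - s)) ^ α) :=
        ENNReal.ofReal_rpow_of_nonneg (by linarith) hα0.le
    _ ≤ ENNReal.ofReal (7 * (t - s) ^ α) := by
        refine ENNReal.ofReal_le_ofReal ?_
        rw [Real.mul_rpow (by norm_num) hts]
        have h7 : (7:ℝ) ^ α ≤ 7 := by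
          calc (7:ℝ) ^ α ≤ 7 ^ (1:ℝ) :=
              Real.rpow_le_rpow_of_exponent_le (by norm_num) hα1
            _ = 7 := Real.rpow_one 7
        exact mul_le_mul_of_nonneg_right h7 (Real.rpow_nonneg hts _)
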